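/- For a > 0 and τ > 0 with aτ < 1, the equation βτ = arctan(β/a) has a unique smallest positive root β* > 0, and β* satisfies 0 < β* < π/(2τ). -/

import Mathlib

open Real

theorem stmt_5 (a τ : ℝ) (ha : 0 < a) (hτ : 0 < τ) (h1 : a * τ < 1) :
    ∃! β : ℝ, 0 < β ∧ β * τ = Real.arctan (β / a) ∧
      (∀ β' : ℝ, 0 < β' → β' * τ = Real.arctan (β' / a) → β ≤ β') ∧
      β < Real.pi / (2 * τ) := by
  set f : ℝ → ℝ := fun β => Real.arctan (β / a) - β * τ with hfdef
  have ha' : a ≠ 0 := ne_of_gt ha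
  have hderiv : ∀ x : ℝ, HasDerivAt f (a / (a ^ 2 + x ^ 2) - τ) x := by
    intro x
    have h0 : HasDerivAt (fun β : ℝ => β / a) (1 / a) x := by
      simpa using (hasDerivAt_id x).div_const a
    have h2 : HasDerivAt (fun β : ℝ => Real.arctan (β / a))
        ((1 / (1 + (x / a) ^ 2)) * (1 / a)) x :=
      h0.arctan
    have h3 : HasDerivAt (fun β : ℝ => β * τ) τ x := by
      simpa using (hasDerivAt_id x).mul_const τ
    have h4 := h2.sub h3
    refine h4.congr_deriv ?_
    have hpos : (1 : ℝ) + (x / a) ^ 2 ≠ 0 := by positivity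
    field_simp
  have hcont : Continuous f :=
    (Real.continuous_arctan.comp (continuous_id.div_const a)).sub
      (continuous_id.mul continuous_const)
  set c : ℝ := Real.sqrt (a * (1 - a * τ) / τ) with hcdef
  have hc2pos : 0 < a * (1 - a * τ) / τ := by
    apply div_pos _ hτ
    nlinarith
  have hcpos : 0 < c := Real.sqrt_pos.mpr hc2pos
  have hcsq : c ^ 2 = a * (1 - a * τ) / τ := Real.sq_sqrt hc2pos.le
  -- derivative sign
  have hderiv_pos : ∀ x ∈ Set.Ioo (0:ℝ) c, 0 < a / (a ^ 2 + x ^ 2) - τ := by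
    intro x hx
    have hx2 : x ^ 2 < c ^ 2 := by nlinarith [hx.1, hx.2]
    have hden : 0 < a ^ 2 + x ^ 2 := by positivity
    rw [sub_pos, lt_div_iff₀ hden]
    rw [hcsq] at hx2
    have := (lt_div_iff₀ hτ).mp hx2
    nlinarith
  have hderiv_neg : ∀ x ∈ Set.Ioi c, a / (a ^ 2 + x ^ 2) - τ < 0 := by
    intro x hx
    have hx' : c < x := hx
    have hx2 : c ^ 2 < x ^ 2 := by nlinarith
    have hden : 0 < a ^ 2 + x ^ 2 := by positivity
    rw [sub_neg, div_lt_iff₀ hden]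
    rw [hcsq] at hx2
    have := (div_lt_iff₀ hτ).mp hx2
    nlinarith
  have hmono : StrictMonoOn f (Set.Icc 0 c) := by
    apply StrictMonoOn.mono (s := Set.Icc 0 c)
      (strictMonoOn_of_hasDerivWithinAt_pos (convex_Icc 0 c)
        (hcont.continuousOn)
        (fun x hx => ((hderiv x).hasDerivWithinAt))
        (fun x hx => by
          have : x ∈ Set.Ioo (0:ℝ) c := by
            simpa [interior_Icc] using hx
          exact hderiv_pos x this))
      le_rfl
  have hanti : StrictAntiOn f (Set.Ici c) := by
    apply strictAntiOn_of_hasDerivWithinAt_neg (convex_Ici c)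
      hcont.continuousOn
      (fun x hx => (hderiv x).hasDerivWithinAt)
      (fun x hx => by
        have : x ∈ Set.Ioi c := by simpa [interior_Ici] using hx
        exact hderiv_neg x this)
  have hf0 : f 0 = 0 := by simp [hfdef]
  have hfc : 0 < f c := by
    have := hmono (Set.left_mem_Icc.mpr hcpos.le) (Set.right_mem_Icc.mpr hcpos.le) hcpos
    rwa [hf0] at this
  set M : ℝ := Real.pi / (2 * τ) with hMdef
  have hMpos : 0 < M := by
    apply div_pos Real.pi_pos (by linarith)
  have hfM : f M < 0 := by
    have harc : Real.arctan (M / a) < Real.pi / 2 := Real.arctan_lt_pi_div_two _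
    have hMτ : M * τ = Real.pi / 2 := by
      field_simp [hMdef]
      rw [hMdef]
      field_simp
    simp only [hfdef]
    rw [hMτ]
    linarith
  have hcM : c < M := by
    by_contra h
    push_neg at h
    have hMc : M ∈ Set.Icc (0:ℝ) c := ⟨hMpos.le, h⟩
    have := hmono (Set.left_mem_Icc.mpr hcpos.le) hMc hMpos
    rw [hf0] at this
    linarith
  -- IVT on [c, M]
  obtain ⟨β, hβmem, hβroot⟩ : ∃ β ∈ Set.Icc c M, f β = 0 := by
    have h0mem : (0:ℝ) ∈ Set.Icc (f M) (f c) := ⟨hfM.le, hfc.le⟩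
    have := intermediate_value_Icc' hcM.le hcont.continuousOn h0mem
    obtain ⟨x, hx, hfx⟩ := this
    exact ⟨x, hx, hfx⟩
  have hβc : c < β := by
    rcases eq_or_lt_of_le hβmem.1 with h | h
    · exfalso; rw [← h] at hβroot; linarith
    · exact h
  have hβM : β < M := by
    rcases eq_or_lt_of_le hβmem.2 with h | h
    · exfalso; rw [h] at hβroot; linarith
    · exact h
  have hβpos : 0 < β := lt_trans hcpos hβc
  -- uniqueness of positive root
  have huniq : ∀ β' : ℝ, 0 < β' → f β' = 0 → β' = β := by
    intro β' hβ' hroot'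
    rcases le_or_gt β' c with h | h
    · exfalso
      have := hmono (Set.left_mem_Icc.mpr hcpos.le) ⟨hβ'.le, h⟩ hβ'
      rw [hf0, hroot'] at this
      exact lt_irrefl 0 this
    · exact hanti.injOn h.le hβc.le (by rw [hroot', hβroot])
  have heq : ∀ x : ℝ, (x * τ = Real.arctan (x / a)) ↔ f x = 0 := by
    intro x; constructor <;> intro h <;> simp only [hfdef] at * <;> linarith
  refine ⟨β, ⟨hβpos, (heq β).mpr hβroot, ?_, hβM⟩, ?_⟩
  · intro β' hβ'pos hβ'eq
    rw [huniq β' hβ'pos ((heq β').mp hβ'eq)]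
  · rintro y ⟨hy, hyeq, -, -⟩
    exact huniq y hy ((heq y).mp hyeq)
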